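/- Let γ > 1 and let ρ, u : (σ_ℓ, σ_p) → ℝ be positive differentiable functions satisfying ρ'(x) = −2u(u−x)ρ/(x((u−x)²−c²)) and u' = 2c²u/(x((u−x)²−c²)) with c(x)² = γ s₁ ρ(x)^{γ−1}, s₁ > 0, and suppose u(x) + c(x) − x > 0 and 0 < u(x) < x on (σ_ℓ, σ_p). Define F_r(x) = ½u(x)² + x u(x)/(γ−1) − (γ/(γ−1)) (u(x)/(x−u(x))) c(x)²/γ + Q. Then F_r'(x) > 0 on (σ_ℓ, σ_p), i.e., F_r is strictly increasing. -/

import Mathlib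

open Set in
theorem stmt_15 (γ s₁ σ_ℓ σ_p Q : ℝ) (ρ u c : ℝ → ℝ)
    (hγ : 1 < γ) (hs₁ : 0 < s₁) (hσℓ : 0 < σ_ℓ) (hσ : σ_ℓ < σ_p)
    (hρpos : ∀ x ∈ Ioo σ_ℓ σ_p, 0 < ρ x)
    (hc : ∀ x ∈ Ioo σ_ℓ σ_p, 0 ≤ c x ∧ c x ^ 2 = γ * s₁ * ρ x ^ (γ - 1))
    (hρ' : ∀ x ∈ Ioo σ_ℓ σ_p, HasDerivAt ρ
      (-(2 * u x * (u x - x) * ρ x) / (x * ((u x - x) ^ 2 - c x ^ 2))) x)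
    (hu' : ∀ x ∈ Ioo σ_ℓ σ_p, HasDerivAt u
      (2 * c x ^ 2 * u x / (x * ((u x - x) ^ 2 - c x ^ 2))) x)
    (hbounds : ∀ x ∈ Ioo σ_ℓ σ_p, 0 < u x ∧ u x < x ∧ 0 < u x + c x - x) :
    StrictMonoOn (fun x => u x ^ 2 / 2 + x * u x / (γ - 1)
      - (γ / (γ - 1)) * (u x / (x - u x)) * (c x ^ 2 / γ) + Q)
      (Ioo σ_ℓ σ_p) := by
  set F : ℝ → ℝ := fun x => u x ^ 2 / 2 + x * u x / (γ - 1)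
      - (γ / (γ - 1)) * (u x / (x - u x)) * (c x ^ 2 / γ) + Q with hF
  have hkey : ∀ x ∈ Ioo σ_ℓ σ_p, HasDerivAt F
      (u x * ((x - u x) ^ 2 + 3 * c x ^ 2) / ((γ - 1) * (x - u x) ^ 2)) x := by
    intro x hx
    obtain ⟨hu0, hux, hucx⟩ := hbounds x hx
    have hx0 : 0 < x := hσℓ.trans hx.1
    have hρ0 : 0 < ρ x := hρpos x hx
    have hw : 0 < x - u x := by linarith
    have hcw : x - u x < c x := by linarith
    have hc0 : 0 < c x := lt_of_le_of_lt hw.le hcw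
    have hD : x * ((u x - x) ^ 2 - c x ^ 2) < 0 := by
      have h1 : (u x - x) ^ 2 < c x ^ 2 := by
        have : (u x - x) ^ 2 = (x - u x) ^ 2 := by ring
        rw [this]
        exact pow_lt_pow_left₀ hcw hw.le (by norm_num)
      exact mul_neg_of_pos_of_neg hx0 (by linarith)
    have hDne : x * ((u x - x) ^ 2 - c x ^ 2) ≠ 0 := ne_of_lt hD
    have hwne : x - u x ≠ 0 := ne_of_gt hw
    have hk : γ - 1 ≠ 0 := by linarith
    have hγ0 : γ ≠ 0 := by linarith
    -- derivative of c^2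
    have hc2' : HasDerivAt (fun y => c y ^ 2)
        ((γ - 1) * c x ^ 2 *
          (-(2 * u x * (u x - x) * ρ x) / (x * ((u x - x) ^ 2 - c x ^ 2))) / ρ x) x := by
      have hrpow : HasDerivAt (fun y => γ * s₁ * ρ y ^ (γ - 1))
          (γ * s₁ * ((-(2 * u x * (u x - x) * ρ x) / (x * ((u x - x) ^ 2 - c x ^ 2))) *
            (γ - 1) * ρ x ^ (γ - 1 - 1))) x := by
        exact ((hρ' x hx).rpow_const (Or.inl hρ0.ne')).const_mul (γ * s₁)
      have heq : (fun y => c y ^ 2) =ᶠ[nhds x] (fun y => γ * s₁ * ρ y ^ (γ - 1)) := by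
        filter_upwards [isOpen_Ioo.mem_nhds hx] with y hy
        exact (hc y hy).2
      have hval : γ * s₁ * ((-(2 * u x * (u x - x) * ρ x) / (x * ((u x - x) ^ 2 - c x ^ 2))) *
            (γ - 1) * ρ x ^ (γ - 1 - 1))
          = (γ - 1) * c x ^ 2 *
          (-(2 * u x * (u x - x) * ρ x) / (x * ((u x - x) ^ 2 - c x ^ 2))) / ρ x := by
        have hpow : γ * s₁ * ρ x ^ (γ - 1 - 1) = c x ^ 2 / ρ x := by
          rw [(hc x hx).2, Real.rpow_sub hρ0, Real.rpow_one]; ring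
        linear_combination
          (-(2 * u x * (u x - x) * ρ x) / (x * ((u x - x) ^ 2 - c x ^ 2))) * (γ - 1) * hpow
      rw [← hval]
      exact hrpow.congr_of_eventuallyEq heq
    -- assemble derivative of F
    have hu'x := hu' x hx
    have hterm1 : HasDerivAt (fun y => u y ^ 2 / 2)
        ((2 * u x ^ 1 * (2 * c x ^ 2 * u x / (x * ((u x - x) ^ 2 - c x ^ 2)))) / 2) x :=
      (hu'x.pow 2).div_const 2
    have hterm2 : HasDerivAt (fun y => y * u y / (γ - 1))
        ((1 * u x + x * (2 * c x ^ 2 * u x / (x * ((u x - x) ^ 2 - c x ^ 2)))) / (γ - 1)) x :=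
      ((hasDerivAt_id x).mul hu'x).div_const (γ - 1)
    have hquot : HasDerivAt (fun y => u y / (y - u y))
        (((2 * c x ^ 2 * u x / (x * ((u x - x) ^ 2 - c x ^ 2))) * (x - u x)
          - u x * (1 - (2 * c x ^ 2 * u x / (x * ((u x - x) ^ 2 - c x ^ 2)))))
          / (x - u x) ^ 2) x :=
      hu'x.div ((hasDerivAt_id x).sub hu'x) hwne
    have hterm3 : HasDerivAt (fun y => (γ / (γ - 1)) * (u y / (y - u y)) * (c y ^ 2 / γ))
        ((γ / (γ - 1)) * (((2 * c x ^ 2 * u x / (x * ((u x - x) ^ 2 - c x ^ 2))) * (x - u x)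
          - u x * (1 - (2 * c x ^ 2 * u x / (x * ((u x - x) ^ 2 - c x ^ 2)))))
          / (x - u x) ^ 2) * (c x ^ 2 / γ)
         + (γ / (γ - 1)) * (u x / (x - u x)) *
            (((γ - 1) * c x ^ 2 *
          (-(2 * u x * (u x - x) * ρ x) / (x * ((u x - x) ^ 2 - c x ^ 2))) / ρ x) / γ)) x :=
      (hquot.const_mul (γ / (γ - 1))).mul (hc2'.div_const γ)
    have hFd := ((hterm1.add hterm2).sub hterm3).add_const Q
    have hval2 : (2 * u x ^ 1 * (2 * c x ^ 2 * u x / (x * ((u x - x) ^ 2 - c x ^ 2)))) / 2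
        + (1 * u x + x * (2 * c x ^ 2 * u x / (x * ((u x - x) ^ 2 - c x ^ 2)))) / (γ - 1)
        - ((γ / (γ - 1)) * (((2 * c x ^ 2 * u x / (x * ((u x - x) ^ 2 - c x ^ 2))) * (x - u x)
          - u x * (1 - (2 * c x ^ 2 * u x / (x * ((u x - x) ^ 2 - c x ^ 2)))))
          / (x - u x) ^ 2) * (c x ^ 2 / γ)
         + (γ / (γ - 1)) * (u x / (x - u x)) *
            (((γ - 1) * c x ^ 2 *
          (-(2 * u x * (u x - x) * ρ x) / (x * ((u x - x) ^ 2 - c x ^ 2))) / ρ x) / γ))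
        = u x * ((x - u x) ^ 2 + 3 * c x ^ 2) / ((γ - 1) * (x - u x) ^ 2) := by
      have hD2 : (u x - x) ^ 2 - c x ^ 2 ≠ 0 := right_ne_zero_of_mul hDne
      field_simp
      ring
    rw [← hval2]
    exact hFd
  have hconv : Convex ℝ (Ioo σ_ℓ σ_p) := convex_Ioo _ _
  apply StrictMonoOn.mono (s := Ioo σ_ℓ σ_p) ?_ (subset_refl _)
  apply strictMonoOn_of_deriv_pos hconv
  · intro x hx
    exact ((hkey x hx).differentiableAt.continuousAt).continuousWithinAt
  · intro x hx
    rw [interior_Ioo] at hx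
    rw [(hkey x hx).deriv]
    obtain ⟨hu0, hux, hucx⟩ := hbounds x hx
    have hw : 0 < x - u x := by linarith
    have hc0 : 0 < c x := by linarith
    have hγ1 : (0:ℝ) < γ - 1 := by linarith
    apply div_pos
    · positivity
    · exact mul_pos hγ1 (by positivity)
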